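/- The convex hull of the exponent vectors of 1, 2, 3, 4, 5, 6, 7 with respect to the primes 2, 3, 5, 7 — namely the points (0,0,0,0), (1,0,0,0), (0,1,0,0), (2,0,0,0), (0,0,1,0), (1,1,0,0), (0,0,0,1) in ℝ^4 — has 4-dimensional Lebesgue volume 1/8. -/

import Mathlib

open MeasureTheory


lemma vol1 (m : ℝ) : volume {v : Fin 1 → ℝ | 0 ≤ v 0 ∧ v 0 ≤ m} = ENNReal.ofReal m := by
  have h := (volume_preserving_funUnique (Fin 1) ℝ).measure_preimage
    (s := Set.Icc 0 m) measurableSet_Icc.nullMeasurableSet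
  have he : (MeasurableEquiv.funUnique (Fin 1) ℝ) ⁻¹' (Set.Icc 0 m)
      = {v : Fin 1 → ℝ | 0 ≤ v 0 ∧ v 0 ≤ m} := by
    ext v; simp [MeasurableEquiv.funUnique, Set.mem_Icc]
  rw [he] at h
  refine h.trans ?_; rw [Real.volume_Icc, sub_zero]

lemma lint_Icc (L : ℝ) (hL : 0 ≤ L) (f : ℝ → ℝ) (hf : Continuous f)
    (hpos : ∀ x ∈ Set.Icc (0:ℝ) L, 0 ≤ f x) :
    ∫⁻ x in Set.Icc (0:ℝ) L, ENNReal.ofReal (f x) = ENNReal.ofReal (∫ x in (0:ℝ)..L, f x) := by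
  rw [← ofReal_integral_eq_lintegral_ofReal (hf.integrableOn_Icc)
    (((ae_restrict_mem measurableSet_Icc).mono hpos))]
  rw [intervalIntegral.integral_of_le hL, integral_Icc_eq_integral_Ioc]

lemma integral_cubic (a b c0 c1 c2 c3 : ℝ) :
    ∫ x in a..b, (c0 + c1*x + c2*x^2 + c3*x^3) =
      c0*(b-a) + c1*(b^2-a^2)/2 + c2*(b^3-a^3)/3 + c3*(b^4-a^4)/4 := by
  have i1 : IntervalIntegrable (fun _ : ℝ => c0) volume a b := intervalIntegrable_const
  have i2 : IntervalIntegrable (fun x : ℝ => c1 * x) volume a b :=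
    Continuous.intervalIntegrable (by continuity) a b
  have i3 : IntervalIntegrable (fun x : ℝ => c2 * x ^ 2) volume a b :=
    Continuous.intervalIntegrable (by continuity) a b
  have i4 : IntervalIntegrable (fun x : ℝ => c3 * x ^ 3) volume a b :=
    Continuous.intervalIntegrable (by continuity) a b
  rw [intervalIntegral.integral_add ((i1.add i2).add i3) i4,
      intervalIntegral.integral_add (i1.add i2) i3,
      intervalIntegral.integral_add i1 i2]
  have hx : (∫ x in a..b, c1 * x) = c1 * ((b^2 - a^2)/2) := by
    rw [intervalIntegral.integral_const_mul, integral_id]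
  simp only [intervalIntegral.integral_const, intervalIntegral.integral_const_mul,
    integral_pow, hx, smul_eq_mul]
  push_cast
  ring

lemma vol2 (c d : ℝ) (hc : 0 ≤ c) (hd : 0 ≤ d) (hcd : c + d ≤ 1) :
    volume {w : Fin 2 → ℝ | 0 ≤ w 0 ∧ 0 ≤ w 1 ∧ w 1 + c + d ≤ 1 ∧ w 0 + w 1 + 2*c + 2*d ≤ 2}
      = ENNReal.ofReal (3/2 * (1-c-d)^2) := by
  set T : Set (ℝ × (Fin 1 → ℝ)) :=
    {p | 0 ≤ p.2 0 ∧ 0 ≤ p.1 ∧ p.1 + c + d ≤ 1 ∧ p.2 0 + p.1 + 2*c + 2*d ≤ 2} with hTdef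
  have hT : MeasurableSet T := by
    apply MeasurableSet.inter
    · exact measurableSet_le measurable_const ((measurable_pi_apply 0).comp measurable_snd)
    apply MeasurableSet.inter
    · exact measurableSet_le measurable_const measurable_fst
    apply MeasurableSet.inter
    · exact measurableSet_le ((measurable_fst.add_const c).add_const d) measurable_const
    · have hm : Measurable fun p : ℝ × (Fin 1 → ℝ) => p.2 0 + p.1 + 2*c + 2*d :=
        ((((measurable_pi_apply (0 : Fin 1) : Measurable fun v : Fin 1 → ℝ => v 0)).comp
          measurable_snd).add measurable_fst).add_const (2*c) |>.add_const (2*d)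
      exact measurableSet_le hm measurable_const
  have hpre : (MeasurableEquiv.piFinSuccAbove (fun _ : Fin 2 => ℝ) 1) ⁻¹' T
      = {w : Fin 2 → ℝ | 0 ≤ w 0 ∧ 0 ≤ w 1 ∧ w 1 + c + d ≤ 1 ∧ w 0 + w 1 + 2*c + 2*d ≤ 2} := by
    ext w
    simp [T, MeasurableEquiv.piFinSuccAbove, Fin.insertNthEquiv, Fin.removeNth, Fin.succAbove]
  rw [← hpre,
    (volume_preserving_piFinSuccAbove (fun _ : Fin 2 => ℝ) 1).measure_preimage
      hT.nullMeasurableSet]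
  rw [Measure.volume_eq_prod, Measure.prod_apply hT]
  have hslice : (fun b => volume (Prod.mk b ⁻¹' T))
      = Set.indicator (Set.Icc 0 (1-c-d)) (fun b => ENNReal.ofReal (2-b-2*c-2*d)) := by
    funext b
    by_cases hb : b ∈ Set.Icc (0:ℝ) (1-c-d)
    · rw [Set.indicator_of_mem hb]
      obtain ⟨hb0, hb1⟩ := hb
      have : (Prod.mk b ⁻¹' T : Set (Fin 1 → ℝ)) = {v : Fin 1 → ℝ | 0 ≤ v 0 ∧ v 0 ≤ 2-b-2*c-2*d} := by
        ext v
        simp only [T, Set.mem_preimage, Set.mem_setOf_eq]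
        constructor
        · rintro ⟨h1, h2, h3, h4⟩; exact ⟨h1, by linarith⟩
        · rintro ⟨h1, h2⟩; exact ⟨h1, hb0, by linarith, by linarith⟩
      rw [this, vol1]
    · rw [Set.indicator_of_notMem hb]
      have : (Prod.mk b ⁻¹' T : Set (Fin 1 → ℝ)) = ∅ := by
        ext v
        simp only [T, Set.mem_preimage, Set.mem_setOf_eq, Set.mem_empty_iff_false, iff_false]
        rintro ⟨h1, h2, h3, h4⟩
        exact hb ⟨h2, by linarith⟩
      rw [this, measure_empty]
  rw [show (∫⁻ b, volume (Prod.mk b ⁻¹' T)) = ∫⁻ b, (Set.Icc 0 (1-c-d)).indicator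
      (fun b => ENNReal.ofReal (2-b-2*c-2*d)) b from lintegral_congr fun b => congrFun hslice b,
    lintegral_indicator measurableSet_Icc]
  rw [lint_Icc (1-c-d) (by linarith) _ (by continuity) (fun x hx => by
    obtain ⟨h1, h2⟩ := hx; linarith)]
  have : (∫ x in (0:ℝ)..(1-c-d), (2-x-2*c-2*d)) = 3/2 * (1-c-d)^2 := by
    have hcong : ∀ x : ℝ, 2-x-2*c-2*d = (2-2*c-2*d) + (-1)*x + 0*x^2 + 0*x^3 := by
      intro x; ring
    rw [intervalIntegral.integral_congr (fun x _ => hcong x), integral_cubic]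
    ring
  rw [this]

lemma vol3 (d : ℝ) (hd : 0 ≤ d) (hd1 : d ≤ 1) :
    volume {y : Fin 3 → ℝ | 0 ≤ y 0 ∧ 0 ≤ y 1 ∧ 0 ≤ y 2 ∧ y 1 + y 2 + d ≤ 1 ∧
      y 0 + y 1 + 2*y 2 + 2*d ≤ 2} = ENNReal.ofReal ((1-d)^3 / 2) := by
  have m0 : Measurable fun p : ℝ × (Fin 2 → ℝ) => p.2 0 :=
    (measurable_pi_apply (0 : Fin 2) : Measurable fun v : Fin 2 → ℝ => v 0).comp measurable_snd
  have m1 : Measurable fun p : ℝ × (Fin 2 → ℝ) => p.2 1 :=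
    (measurable_pi_apply (1 : Fin 2) : Measurable fun v : Fin 2 → ℝ => v 1).comp measurable_snd
  set T : Set (ℝ × (Fin 2 → ℝ)) :=
    {p | 0 ≤ p.2 0 ∧ 0 ≤ p.2 1 ∧ 0 ≤ p.1 ∧ p.2 1 + p.1 + d ≤ 1 ∧
      p.2 0 + p.2 1 + 2*p.1 + 2*d ≤ 2} with hTdef
  have hT : MeasurableSet T := by
    refine MeasurableSet.inter (measurableSet_le measurable_const m0) ?_
    refine MeasurableSet.inter (measurableSet_le measurable_const m1) ?_
    refine MeasurableSet.inter (measurableSet_le measurable_const measurable_fst) ?_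
    refine MeasurableSet.inter
      (measurableSet_le ((m1.add measurable_fst).add_const d) measurable_const) ?_
    exact measurableSet_le
      (((m0.add m1).add (measurable_fst.const_mul 2)).add_const (2*d)) measurable_const
  have hpre : (MeasurableEquiv.piFinSuccAbove (fun _ : Fin 3 => ℝ) 2) ⁻¹' T
      = {y : Fin 3 → ℝ | 0 ≤ y 0 ∧ 0 ≤ y 1 ∧ 0 ≤ y 2 ∧ y 1 + y 2 + d ≤ 1 ∧
        y 0 + y 1 + 2*y 2 + 2*d ≤ 2} := by
    ext y
    simp [T, MeasurableEquiv.piFinSuccAbove, Fin.insertNthEquiv, Fin.removeNth, Fin.succAbove]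
  rw [← hpre,
    (volume_preserving_piFinSuccAbove (fun _ : Fin 3 => ℝ) 2).measure_preimage
      hT.nullMeasurableSet]
  rw [Measure.volume_eq_prod, Measure.prod_apply hT]
  have hslice : (fun c => volume (Prod.mk c ⁻¹' T))
      = Set.indicator (Set.Icc 0 (1-d)) (fun c => ENNReal.ofReal (3/2 * (1-c-d)^2)) := by
    funext c
    by_cases hc : c ∈ Set.Icc (0:ℝ) (1-d)
    · rw [Set.indicator_of_mem hc]
      obtain ⟨hc0, hc1⟩ := hc
      have : (Prod.mk c ⁻¹' T : Set (Fin 2 → ℝ))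
          = {w : Fin 2 → ℝ | 0 ≤ w 0 ∧ 0 ≤ w 1 ∧ w 1 + c + d ≤ 1 ∧
              w 0 + w 1 + 2*c + 2*d ≤ 2} := by
        ext w
        simp only [T, Set.mem_preimage, Set.mem_setOf_eq]
        constructor
        · rintro ⟨h1, h2, h3, h4, h5⟩; exact ⟨h1, h2, by linarith, by linarith⟩
        · rintro ⟨h1, h2, h3, h4⟩; exact ⟨h1, h2, hc0, by linarith, by linarith⟩
      rw [this, vol2 c d hc0 hd (by linarith)]
    · rw [Set.indicator_of_notMem hc]
      have : (Prod.mk c ⁻¹' T : Set (Fin 2 → ℝ)) = ∅ := by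
        ext w
        simp only [T, Set.mem_preimage, Set.mem_setOf_eq, Set.mem_empty_iff_false, iff_false]
        rintro ⟨h1, h2, h3, h4, h5⟩
        exact hc ⟨h3, by linarith⟩
      rw [this, measure_empty]
  rw [show (∫⁻ c, volume (Prod.mk c ⁻¹' T)) = ∫⁻ c, (Set.Icc 0 (1-d)).indicator
      (fun c => ENNReal.ofReal (3/2 * (1-c-d)^2)) c from lintegral_congr
        fun c => congrFun hslice c,
    lintegral_indicator measurableSet_Icc]
  rw [lint_Icc (1-d) (by linarith) _ (by continuity) (fun x _ => by positivity)]
  have : (∫ x in (0:ℝ)..(1-d), (3/2 * (1-x-d)^2)) = (1-d)^3 / 2 := by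
    have hcong : ∀ x : ℝ, 3/2 * (1-x-d)^2
        = (3/2*(1-d)^2) + (-3*(1-d))*x + (3/2)*x^2 + 0*x^3 := by intro x; ring
    rw [intervalIntegral.integral_congr (fun x _ => hcong x), integral_cubic]
    ring
  rw [this]

lemma vol4 :
    volume {x : Fin 4 → ℝ | 0 ≤ x 0 ∧ 0 ≤ x 1 ∧ 0 ≤ x 2 ∧ 0 ≤ x 3 ∧
      x 1 + x 2 + x 3 ≤ 1 ∧ x 0 + x 1 + 2*x 2 + 2*x 3 ≤ 2} = ENNReal.ofReal (1/8) := by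
  have m0 : Measurable fun p : ℝ × (Fin 3 → ℝ) => p.2 0 :=
    (measurable_pi_apply (0 : Fin 3) : Measurable fun v : Fin 3 → ℝ => v 0).comp measurable_snd
  have m1 : Measurable fun p : ℝ × (Fin 3 → ℝ) => p.2 1 :=
    (measurable_pi_apply (1 : Fin 3) : Measurable fun v : Fin 3 → ℝ => v 1).comp measurable_snd
  have m2 : Measurable fun p : ℝ × (Fin 3 → ℝ) => p.2 2 :=
    (measurable_pi_apply (2 : Fin 3) : Measurable fun v : Fin 3 → ℝ => v 2).comp measurable_snd
  set T : Set (ℝ × (Fin 3 → ℝ)) :=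
    {p | 0 ≤ p.2 0 ∧ 0 ≤ p.2 1 ∧ 0 ≤ p.2 2 ∧ 0 ≤ p.1 ∧ p.2 1 + p.2 2 + p.1 ≤ 1 ∧
      p.2 0 + p.2 1 + 2*p.2 2 + 2*p.1 ≤ 2} with hTdef
  have hT : MeasurableSet T := by
    refine MeasurableSet.inter (measurableSet_le measurable_const m0) ?_
    refine MeasurableSet.inter (measurableSet_le measurable_const m1) ?_
    refine MeasurableSet.inter (measurableSet_le measurable_const m2) ?_
    refine MeasurableSet.inter (measurableSet_le measurable_const measurable_fst) ?_
    refine MeasurableSet.inter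
      (measurableSet_le ((m1.add m2).add measurable_fst) measurable_const) ?_
    exact measurableSet_le
      (((m0.add m1).add (m2.const_mul 2)).add (measurable_fst.const_mul 2)) measurable_const
  have hpre : (MeasurableEquiv.piFinSuccAbove (fun _ : Fin 4 => ℝ) 3) ⁻¹' T
      = {x : Fin 4 → ℝ | 0 ≤ x 0 ∧ 0 ≤ x 1 ∧ 0 ≤ x 2 ∧ 0 ≤ x 3 ∧
          x 1 + x 2 + x 3 ≤ 1 ∧ x 0 + x 1 + 2*x 2 + 2*x 3 ≤ 2} := by
    ext x
    simp [T, MeasurableEquiv.piFinSuccAbove, Fin.insertNthEquiv, Fin.removeNth, Fin.succAbove]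
  rw [← hpre,
    (volume_preserving_piFinSuccAbove (fun _ : Fin 4 => ℝ) 3).measure_preimage
      hT.nullMeasurableSet]
  rw [Measure.volume_eq_prod, Measure.prod_apply hT]
  have hslice : (fun d => volume (Prod.mk d ⁻¹' T))
      = Set.indicator (Set.Icc 0 1) (fun d => ENNReal.ofReal ((1-d)^3 / 2)) := by
    funext d
    by_cases hdm : d ∈ Set.Icc (0:ℝ) 1
    · rw [Set.indicator_of_mem hdm]
      obtain ⟨hd0, hd1⟩ := hdm
      have : (Prod.mk d ⁻¹' T : Set (Fin 3 → ℝ))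
          = {y : Fin 3 → ℝ | 0 ≤ y 0 ∧ 0 ≤ y 1 ∧ 0 ≤ y 2 ∧ y 1 + y 2 + d ≤ 1 ∧
              y 0 + y 1 + 2*y 2 + 2*d ≤ 2} := by
        ext y
        simp only [T, Set.mem_preimage, Set.mem_setOf_eq]
        constructor
        · rintro ⟨h1, h2, h3, h4, h5, h6⟩; exact ⟨h1, h2, h3, by linarith, by linarith⟩
        · rintro ⟨h1, h2, h3, h4, h5⟩; exact ⟨h1, h2, h3, hd0, by linarith, by linarith⟩
      rw [this, vol3 d hd0 hd1]
    · rw [Set.indicator_of_notMem hdm]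
      have : (Prod.mk d ⁻¹' T : Set (Fin 3 → ℝ)) = ∅ := by
        ext y
        simp only [T, Set.mem_preimage, Set.mem_setOf_eq, Set.mem_empty_iff_false, iff_false]
        rintro ⟨h1, h2, h3, h4, h5, h6⟩
        exact hdm ⟨h4, by linarith⟩
      rw [this, measure_empty]
  rw [show (∫⁻ d, volume (Prod.mk d ⁻¹' T)) = ∫⁻ d, (Set.Icc (0:ℝ) 1).indicator
      (fun d => ENNReal.ofReal ((1-d)^3 / 2)) d from lintegral_congr
        fun d => congrFun hslice d,
    lintegral_indicator measurableSet_Icc]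
  rw [lint_Icc 1 zero_le_one _ (by continuity) (fun x hx => by
    obtain ⟨_, h⟩ := hx
    have h1 : (0:ℝ) ≤ 1 - x := by linarith
    positivity)]
  have : (∫ x in (0:ℝ)..1, ((1-x)^3 / 2)) = 1/8 := by
    have hcong : ∀ x : ℝ, (1-x)^3 / 2
        = (1/2) + (-(3/2))*x + (3/2)*x^2 + (-(1/2))*x^3 := by intro x; ring
    rw [intervalIntegral.integral_congr (fun x _ => hcong x), integral_cubic]
    ring
  rw [this]


private lemma cv4_0 {α : Type*} (a b c d : α) : (![a,b,c,d]) (0:Fin 4) = a := rfl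
private lemma cv4_1 {α : Type*} (a b c d : α) : (![a,b,c,d]) (1:Fin 4) = b := rfl
private lemma cv4_2 {α : Type*} (a b c d : α) : (![a,b,c,d]) (2:Fin 4) = c := rfl
private lemma cv4_3 {α : Type*} (a b c d : α) : (![a,b,c,d]) (3:Fin 4) = d := rfl

lemma hull_eq : convexHull ℝ
      ({![0, 0, 0, 0], ![1, 0, 0, 0], ![0, 1, 0, 0], ![2, 0, 0, 0],
        ![0, 0, 1, 0], ![1, 1, 0, 0], ![0, 0, 0, 1]} : Set (Fin 4 → ℝ))
    = {x : Fin 4 → ℝ | 0 ≤ x 0 ∧ 0 ≤ x 1 ∧ 0 ≤ x 2 ∧ 0 ≤ x 3 ∧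
        x 1 + x 2 + x 3 ≤ 1 ∧ x 0 + x 1 + 2*x 2 + 2*x 3 ≤ 2} := by
  apply Set.Subset.antisymm
  · apply convexHull_min
    · intro p hp
      simp only [Set.mem_insert_iff, Set.mem_singleton_iff] at hp
      rcases hp with rfl|rfl|rfl|rfl|rfl|rfl|rfl <;>
        norm_num [Set.mem_setOf_eq, cv4_0, cv4_1, cv4_2, cv4_3]
    · intro x hx y hy a b ha hb hab
      obtain ⟨hx0, hx1, hx2, hx3, hx4, hx5⟩ := hx
      obtain ⟨hy0, hy1, hy2, hy3, hy4, hy5⟩ := hy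
      have e : ∀ i, (a • x + b • y) i = a * x i + b * y i := fun i => rfl
      refine ⟨?_, ?_, ?_, ?_, ?_, ?_⟩ <;> simp only [e] <;> nlinarith
  · intro x hx
    obtain ⟨hx0, hx1, hx2, hx3, hx4, hx5⟩ := hx
    set l3 : ℝ := max 0 (x 0 + 2*x 1 + 2*x 2 + 2*x 3 - 2) with hl3
    have hl30 : 0 ≤ l3 := le_max_left _ _
    have hl3r : x 0 + 2*x 1 + 2*x 2 + 2*x 3 - 2 ≤ l3 := le_max_right _ _
    have hl3a : l3 ≤ x 0 := max_le hx0 (by linarith)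
    have hl3b : l3 ≤ x 1 := max_le hx1 (by linarith)
    set w : Fin 6 → ℝ :=
      ![1 - ((x 0 - l3)/2 + x 1) - x 2 - x 3, (x 0 - l3)/2, x 1 - l3, l3, x 2, x 3] with hw
    set z : Fin 6 → (Fin 4 → ℝ) :=
      ![![0,0,0,0], ![2,0,0,0], ![0,1,0,0], ![1,1,0,0], ![0,0,1,0], ![0,0,0,1]] with hz
    have hw0 : ∀ i ∈ (Finset.univ : Finset (Fin 6)), 0 ≤ w i := by
      intro i _
      fin_cases i
      · exact (by linarith : (0:ℝ) ≤ 1 - ((x 0 - l3)/2 + x 1) - x 2 - x 3)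
      · exact (by linarith : (0:ℝ) ≤ (x 0 - l3)/2)
      · exact (by linarith : (0:ℝ) ≤ x 1 - l3)
      · exact hl30
      · exact hx2
      · exact hx3
    have hsum : ∑ i, w i = 1 := by
      rw [Fin.sum_univ_six]
      show (1 - ((x 0 - l3)/2 + x 1) - x 2 - x 3) + (x 0 - l3)/2 + (x 1 - l3) + l3 + x 2 + x 3 = 1
      ring
    have hzmem : ∀ i ∈ (Finset.univ : Finset (Fin 6)), z i ∈
        ({![0, 0, 0, 0], ![1, 0, 0, 0], ![0, 1, 0, 0], ![2, 0, 0, 0],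
          ![0, 0, 1, 0], ![1, 1, 0, 0], ![0, 0, 0, 1]} : Set (Fin 4 → ℝ)) := by
      intro i _
      fin_cases i
      · exact Set.mem_insert _ _
      · exact Set.mem_insert_of_mem _ (Set.mem_insert_of_mem _ (Set.mem_insert_of_mem _
          (Set.mem_insert _ _)))
      · exact Set.mem_insert_of_mem _ (Set.mem_insert_of_mem _ (Set.mem_insert _ _))
      · exact Set.mem_insert_of_mem _ (Set.mem_insert_of_mem _ (Set.mem_insert_of_mem _
          (Set.mem_insert_of_mem _ (Set.mem_insert_of_mem _ (Set.mem_insert _ _)))))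
      · exact Set.mem_insert_of_mem _ (Set.mem_insert_of_mem _ (Set.mem_insert_of_mem _
          (Set.mem_insert_of_mem _ (Set.mem_insert _ _))))
      · exact Set.mem_insert_of_mem _ (Set.mem_insert_of_mem _ (Set.mem_insert_of_mem _
          (Set.mem_insert_of_mem _ (Set.mem_insert_of_mem _ (Set.mem_insert_of_mem _ rfl)))))
    have hmem := Finset.centerMass_mem_convexHull Finset.univ hw0 (by rw [hsum]; norm_num) hzmem
    rw [Finset.centerMass_eq_of_sum_1 _ _ hsum] at hmem
    have hxeq : (∑ i, w i • z i) = x := by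
      rw [Fin.sum_univ_six]
      funext j
      fin_cases j
      · show (1 - ((x 0 - l3)/2 + x 1) - x 2 - x 3) * 0 + ((x 0 - l3)/2) * 2 + (x 1 - l3) * 0
          + l3 * 1 + x 2 * 0 + x 3 * 0 = x 0
        ring
      · show (1 - ((x 0 - l3)/2 + x 1) - x 2 - x 3) * 0 + ((x 0 - l3)/2) * 0 + (x 1 - l3) * 1
          + l3 * 1 + x 2 * 0 + x 3 * 0 = x 1
        ring
      · show (1 - ((x 0 - l3)/2 + x 1) - x 2 - x 3) * 0 + ((x 0 - l3)/2) * 0 + (x 1 - l3) * 0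
          + l3 * 0 + x 2 * 1 + x 3 * 0 = x 2
        ring
      · show (1 - ((x 0 - l3)/2 + x 1) - x 2 - x 3) * 0 + ((x 0 - l3)/2) * 0 + (x 1 - l3) * 0
          + l3 * 0 + x 2 * 0 + x 3 * 1 = x 3
        ring
    rwa [hxeq] at hmem


theorem volume_polytope_seven :
    volume (convexHull ℝ
        ({![0, 0, 0, 0], ![1, 0, 0, 0], ![0, 1, 0, 0], ![2, 0, 0, 0],
          ![0, 0, 1, 0], ![1, 1, 0, 0], ![0, 0, 0, 1]} :
          Set (Fin 4 → ℝ))) = 1 / 8 := by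
  rw [hull_eq, vol4]
  rw [ENNReal.ofReal_div_of_pos (by norm_num)]
  norm_num
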